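/- Let h > 0, let N be a nonnegative integer, and let q̃ : ℝ → ℝ satisfy q̃(kh) > 0 for every integer k with −N ≤ k ≤ N. Then the (2N+1)×(2N+1) real matrix A indexed by j, k ∈ {−N, …, N} with entries A_{jk} = −(1/h²)·sinc''(k−j) + q̃(kh)·δ_{jk} (where δ_{jk} is the Kronecker delta and sinc(x) = sin(πx)/(πx) with sinc(0) = 1) is symmetric positive definite. -/

import Mathlib

open Real

/-- The sinc function: sinc(x) = sin(πx)/(πx) for x ≠ 0, sinc(0) = 1. -/
noncomputable def sinc (x : ℝ) : ℝ := if x = 0 then 1 else Real.sin (π * x) / (π * x)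

open intervalIntegral

lemma sinc_eq_integral (x : ℝ) : _root_.sinc x = ∫ t in (0:ℝ)..1, Real.cos (π * x * t) := by
  rcases eq_or_ne x 0 with rfl | hx
  · simp [_root_.sinc]
  · have hc : π * x ≠ 0 := mul_ne_zero Real.pi_ne_zero hx
    have : ∫ t in (0:ℝ)..1, Real.cos (π * x * t)
        = Real.sin (π * x * 1) / (π * x) - Real.sin (π * x * 0) / (π * x) := by
      apply integral_eq_sub_of_hasDerivAt (f := fun t => Real.sin (π * x * t) / (π * x))
      · intro t _
        have h1 : HasDerivAt (fun t : ℝ => π * x * t) (π * x) t := by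
          simpa using (hasDerivAt_id t).const_mul (π * x)
        have := (Real.hasDerivAt_sin (π * x * t)).comp t h1
        have h2 := this.div_const (π * x)
        have h3 : Real.cos (π * x * t) * (π * x) / (π * x) = Real.cos (π * x * t) := by
          field_simp
        rw [Function.comp_def] at h2
        rw [← h3]
        exact h2
      · exact (Real.continuous_cos.comp (by continuity)).intervalIntegrable 0 1
    rw [this]
    simp [_root_.sinc, hx]

noncomputable def sincI1 (x : ℝ) : ℝ := ∫ t in (0:ℝ)..1, -(π * t) * Real.sin (π * x * t)
noncomputable def sincI2 (x : ℝ) : ℝ := ∫ t in (0:ℝ)..1, -((π * t) ^ 2) * Real.cos (π * x * t)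

lemma hasDerivAt_lin (c d y : ℝ) : HasDerivAt (fun y : ℝ => c * y * d) (c * d) y := by
  have h : (fun y : ℝ => c * y * d) = fun y => (c * d) * y := by ext y; ring
  rw [h]; simpa using (hasDerivAt_id y).const_mul (c * d)

lemma hasDerivAt_sinc_int (x : ℝ) :
    HasDerivAt (fun y => ∫ t in (0:ℝ)..1, Real.cos (π * y * t)) (sincI1 x) x := by
  have hmem : ∀ t : ℝ, t ∈ Set.uIoc (0:ℝ) 1 → 0 < t ∧ t ≤ 1 := by
    intro t ht
    rw [Set.uIoc_of_le (by norm_num : (0:ℝ) ≤ 1)] at ht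
    exact ⟨ht.1, ht.2⟩
  have := intervalIntegral.hasDerivAt_integral_of_dominated_loc_of_deriv_le
    (𝕜 := ℝ) (μ := MeasureTheory.volume) (a := (0:ℝ)) (b := 1)
    (F := fun y t => Real.cos (π * y * t))
    (F' := fun y t => -(π * t) * Real.sin (π * y * t))
    (x₀ := x) (s := Metric.ball x 1) (bound := fun _ => π) (Metric.ball_mem_nhds x one_pos)
    (Filter.Eventually.of_forall fun y =>
      ((Real.continuous_cos.comp (by continuity)).aestronglyMeasurable).restrict)
    ((Real.continuous_cos.comp (by continuity)).intervalIntegrable 0 1)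
    (((by continuity : Continuous fun t : ℝ => -(π * t) * Real.sin (π * x * t))).aestronglyMeasurable).restrict
    (Filter.Eventually.of_forall fun t ht y _ => by
      obtain ⟨h0, h1⟩ := hmem t ht
      have hs := Real.abs_sin_le_one (π * y * t)
      have hpt : |(-(π * t)) * Real.sin (π * y * t)| ≤ |π * t| * 1 := by
        rw [abs_mul, abs_neg]
        exact mul_le_mul_of_nonneg_left hs (abs_nonneg _)
      have : |π * t| = π * t := abs_of_nonneg (by positivity)
      have hb : π * t ≤ π := by nlinarith [Real.pi_pos]
      calc ‖-(π * t) * Real.sin (π * y * t)‖ = |(-(π * t)) * Real.sin (π * y * t)| := by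
            rw [Real.norm_eq_abs]
        _ ≤ |π * t| * 1 := hpt
        _ ≤ π := by rw [this]; linarith)
    (intervalIntegrable_const)
    (Filter.Eventually.of_forall fun t _ y _ => by
      have h := (Real.hasDerivAt_cos (π * y * t)).comp y (hasDerivAt_lin π t y)
      exact h.congr_deriv (by ring))
  exact this.2

lemma hasDerivAt_sincI1 (x : ℝ) : HasDerivAt sincI1 (sincI2 x) x := by
  have hmem : ∀ t : ℝ, t ∈ Set.uIoc (0:ℝ) 1 → 0 < t ∧ t ≤ 1 := by
    intro t ht
    rw [Set.uIoc_of_le (by norm_num : (0:ℝ) ≤ 1)] at ht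
    exact ⟨ht.1, ht.2⟩
  have := intervalIntegral.hasDerivAt_integral_of_dominated_loc_of_deriv_le
    (𝕜 := ℝ) (μ := MeasureTheory.volume) (a := (0:ℝ)) (b := 1)
    (F := fun y t => -(π * t) * Real.sin (π * y * t))
    (F' := fun y t => -((π * t) ^ 2) * Real.cos (π * y * t))
    (x₀ := x) (s := Metric.ball x 1) (bound := fun _ => π ^ 2) (Metric.ball_mem_nhds x one_pos)
    (Filter.Eventually.of_forall fun y =>
      ((by continuity : Continuous fun t : ℝ => -(π * t) * Real.sin (π * y * t))).aestronglyMeasurable.restrict)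
    ((by continuity : Continuous fun t : ℝ => -(π * t) * Real.sin (π * x * t)).intervalIntegrable 0 1)
    ((by continuity : Continuous fun t : ℝ => -((π * t) ^ 2) * Real.cos (π * x * t)).aestronglyMeasurable.restrict)
    (Filter.Eventually.of_forall fun t ht y _ => by
      obtain ⟨h0, h1⟩ := hmem t ht
      have hs := Real.abs_cos_le_one (π * y * t)
      have ht2 : t ^ 2 ≤ 1 := by nlinarith
      have hb : (π * t) ^ 2 ≤ π ^ 2 := by rw [mul_pow]; nlinarith [sq_nonneg π]
      calc ‖-((π * t) ^ 2) * Real.cos (π * y * t)‖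
          = (π * t) ^ 2 * |Real.cos (π * y * t)| := by
            rw [Real.norm_eq_abs, abs_mul, abs_neg, abs_of_nonneg (by positivity : (0:ℝ) ≤ (π * t) ^ 2)]
        _ ≤ π ^ 2 * 1 := by
            apply mul_le_mul hb hs (abs_nonneg _) (by positivity)
        _ = π ^ 2 := mul_one _)
    (intervalIntegrable_const)
    (Filter.Eventually.of_forall fun t _ y _ => by
      have h := ((Real.hasDerivAt_sin (π * y * t)).comp y (hasDerivAt_lin π t y)).const_mul (-(π * t))
      exact h.congr_deriv (by ring))
  exact this.2

lemma iteratedDeriv_two_sinc (x : ℝ) : iteratedDeriv 2 _root_.sinc x = sincI2 x := by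
  have hs : _root_.sinc = fun y => ∫ t in (0:ℝ)..1, Real.cos (π * y * t) := funext sinc_eq_integral
  have hd1 : deriv _root_.sinc = sincI1 := by
    funext y
    rw [hs]
    exact (hasDerivAt_sinc_int y).deriv
  rw [show (2:ℕ) = 1 + 1 from rfl, iteratedDeriv_succ, iteratedDeriv_one, hd1]
  exact (hasDerivAt_sincI1 x).deriv

lemma neg_sincI2 (x : ℝ) :
    -sincI2 x = ∫ t in (0:ℝ)..1, (π * t) ^ 2 * Real.cos (π * x * t) := by
  unfold sincI2
  rw [← intervalIntegral.integral_neg]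
  apply intervalIntegral.integral_congr
  intro t _
  ring

lemma sincI2_neg (x : ℝ) : sincI2 (-x) = sincI2 x := by
  unfold sincI2
  apply intervalIntegral.integral_congr
  intro t _
  dsimp only
  have harg : π * (-x) * t = -(π * x * t) := by ring
  rw [harg, Real.cos_neg]

lemma quad_nonneg {n : ℕ} (c : Fin n → ℝ) (x : Fin n → ℝ) :
    0 ≤ ∑ j, ∑ k, x j * (∫ t in (0:ℝ)..1, (π * t) ^ 2 * Real.cos (π * (c k - c j) * t)) * x k := by
  have key : ∀ j k : Fin n,
      x j * (∫ t in (0:ℝ)..1, (π * t) ^ 2 * Real.cos (π * (c k - c j) * t)) * x k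
        = ∫ t in (0:ℝ)..1, (π * t) ^ 2 *
            ((x j * Real.cos (π * c j * t)) * (x k * Real.cos (π * c k * t))
              + (x j * Real.sin (π * c j * t)) * (x k * Real.sin (π * c k * t))) := by
    intro j k
    rw [show x j * (∫ t in (0:ℝ)..1, (π * t) ^ 2 * Real.cos (π * (c k - c j) * t)) * x k
        = (x j * x k) * ∫ t in (0:ℝ)..1, (π * t) ^ 2 * Real.cos (π * (c k - c j) * t) from by
          ring,
      ← intervalIntegral.integral_const_mul]
    apply intervalIntegral.integral_congr
    intro t _
    dsimp only
    have h1 : π * (c k - c j) * t = π * c k * t - π * c j * t := by ring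
    rw [h1, Real.cos_sub]
    ring
  simp only [key]
  have hcont : ∀ j k : Fin n, Continuous fun t : ℝ => (π * t) ^ 2 *
      ((x j * Real.cos (π * c j * t)) * (x k * Real.cos (π * c k * t))
        + (x j * Real.sin (π * c j * t)) * (x k * Real.sin (π * c k * t))) := by
    intro j k; continuity
  have h2 : ∀ j : Fin n, (∑ k, ∫ t in (0:ℝ)..1, (π * t) ^ 2 *
      ((x j * Real.cos (π * c j * t)) * (x k * Real.cos (π * c k * t))
        + (x j * Real.sin (π * c j * t)) * (x k * Real.sin (π * c k * t))))
      = ∫ t in (0:ℝ)..1, ∑ k, (π * t) ^ 2 *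
      ((x j * Real.cos (π * c j * t)) * (x k * Real.cos (π * c k * t))
        + (x j * Real.sin (π * c j * t)) * (x k * Real.sin (π * c k * t))) := by
    intro j
    exact (intervalIntegral.integral_finset_sum
      (fun k _ => (hcont j k).intervalIntegrable 0 1)).symm
  simp only [h2]
  rw [← intervalIntegral.integral_finset_sum
    (fun j _ => (continuous_finset_sum _ fun k _ => hcont j k).intervalIntegrable 0 1)]
  apply intervalIntegral.integral_nonneg (by norm_num)
  intro t _
  have hexp : ∑ j : Fin n, ∑ k : Fin n, (π * t) ^ 2 *
      ((x j * Real.cos (π * c j * t)) * (x k * Real.cos (π * c k * t))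
        + (x j * Real.sin (π * c j * t)) * (x k * Real.sin (π * c k * t)))
      = (π * t) ^ 2 * ((∑ j, x j * Real.cos (π * c j * t)) ^ 2
          + (∑ j, x j * Real.sin (π * c j * t)) ^ 2) := by
    have e1 : (∑ j, x j * Real.cos (π * c j * t)) ^ 2
        = ∑ j, ∑ k, (x j * Real.cos (π * c j * t)) * (x k * Real.cos (π * c k * t)) := by
      rw [sq, Finset.sum_mul_sum]
    have e2 : (∑ j, x j * Real.sin (π * c j * t)) ^ 2
        = ∑ j, ∑ k, (x j * Real.sin (π * c j * t)) * (x k * Real.sin (π * c k * t)) := by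
      rw [sq, Finset.sum_mul_sum]
    rw [e1, e2, mul_add, Finset.mul_sum, Finset.mul_sum, ← Finset.sum_add_distrib]
    apply Finset.sum_congr rfl
    intro j _
    rw [Finset.mul_sum, Finset.mul_sum, ← Finset.sum_add_distrib]
    apply Finset.sum_congr rfl
    intro k _
    ring
  rw [hexp]
  positivity

lemma main_aux (h : ℝ) (hh : 0 < h) {n : ℕ} (c q : Fin n → ℝ) (hq : ∀ j, 0 < q j)
    (x : Fin n → ℝ) (hx : x ≠ 0) :
    0 < ∑ j, ∑ k, x j * ((-(1 / h ^ 2) * sincI2 (c k - c j) +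
      (if j = k then q k else 0)) * x k) := by
  have h1 : ∀ j k : Fin n, x j * ((-(1 / h ^ 2) * sincI2 (c k - c j) +
        (if j = k then q k else 0)) * x k)
      = (1 / h ^ 2) * (x j * (∫ t in (0:ℝ)..1,
          (π * t) ^ 2 * Real.cos (π * (c k - c j) * t)) * x k)
        + x j * (if j = k then q k else 0) * x k := by
    intro j k
    rw [← neg_sincI2]
    ring
  simp only [h1, Finset.sum_add_distrib, ← Finset.mul_sum]
  have h2 : (∑ j, ∑ k, x j * (if j = k then q k else 0) * x k) = ∑ j, q j * x j ^ 2 := by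
    apply Finset.sum_congr rfl
    intro j _
    simp [mul_ite, ite_mul, mul_zero, zero_mul, Finset.sum_ite_eq, Finset.mem_univ]
    ring
  rw [h2]
  obtain ⟨j0, hj0⟩ := Function.ne_iff.mp hx
  have hqpos : 0 < ∑ j, q j * x j ^ 2 := by
    apply Finset.sum_pos' (fun j _ => mul_nonneg (hq j).le (sq_nonneg _))
    exact ⟨j0, Finset.mem_univ _, mul_pos (hq j0) (pow_two_pos_of_ne_zero hj0)⟩
  have hquad := quad_nonneg c x
  have h3 : 0 ≤ (1 / h ^ 2) *
      ∑ j, ∑ k, x j * (∫ t in (0:ℝ)..1, (π * t) ^ 2 * Real.cos (π * (c k - c j) * t)) * x k :=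
    mul_nonneg (by positivity) hquad
  linarith

/-- for h > 0 and q̃ with q̃(kh) > 0 for all integers −N ≤ k ≤ N, the
(2N+1)×(2N+1) matrix with entries A_{jk} = −(1/h²)·sinc''(k−j) + q̃(kh)·δ_{jk}
(indices j,k ∈ {−N,…,N}) is symmetric positive definite. -/
theorem sinc_collocation_matrix_posDef (h : ℝ) (hh : 0 < h) (N : ℕ) (qt : ℝ → ℝ)
    (hq : ∀ k : ℤ, -(N : ℤ) ≤ k → k ≤ N → 0 < qt (k * h)) :
    (Matrix.of fun j k : Fin (2 * N + 1) =>
        -(1 / h ^ 2) *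
            iteratedDeriv 2 _root_.sinc (((((k : ℤ) - N) - ((j : ℤ) - N) : ℤ) : ℝ)) +
          if j = k then qt ((((k : ℤ) - N : ℤ) : ℝ) * h) else 0).PosDef := by
  rw [Matrix.posDef_iff_dotProduct_mulVec]
  constructor
  · -- Hermitian
    ext j k
    simp only [Matrix.conjTranspose_apply, Matrix.of_apply, star_trivial]
    have harg : ((((j : ℤ) - N) - ((k : ℤ) - N) : ℤ) : ℝ)
        = -(((((k : ℤ) - N) - ((j : ℤ) - N) : ℤ) : ℝ)) := by push_cast; ring
    rw [iteratedDeriv_two_sinc, iteratedDeriv_two_sinc, harg, sincI2_neg]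
    by_cases hjk : j = k
    · subst hjk; simp
    · simp [hjk, Ne.symm hjk]
  · intro x hx
    simp only [dotProduct, Matrix.mulVec, Matrix.of_apply, star_trivial,
      Finset.mul_sum]
    have hE : ∀ j k : Fin (2 * N + 1),
        -(1 / h ^ 2) * iteratedDeriv 2 _root_.sinc (((((k : ℤ) - N) - ((j : ℤ) - N) : ℤ) : ℝ))
          = -(1 / h ^ 2) * sincI2 ((((k : ℤ) - N : ℤ) : ℝ) - (((j : ℤ) - N : ℤ) : ℝ)) := by
      intro j k
      have harg : ((((k : ℤ) - N) - ((j : ℤ) - N) : ℤ) : ℝ)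
          = (((k : ℤ) - N : ℤ) : ℝ) - (((j : ℤ) - N : ℤ) : ℝ) := by push_cast; ring
      rw [iteratedDeriv_two_sinc, harg]
    simp only [hE]
    have hq' : ∀ j : Fin (2 * N + 1), 0 < qt ((((j : ℤ) - N : ℤ) : ℝ) * h) := by
      intro j
      have hjlt : (j : ℤ) < 2 * N + 1 := by exact_mod_cast j.isLt
      have hj0 : (0 : ℤ) ≤ (j : ℤ) := Int.ofNat_nonneg _
      exact hq ((j : ℤ) - N) (by omega) (by omega)
    have := main_aux h hh (fun m : Fin (2 * N + 1) => (((m : ℤ) - N : ℤ) : ℝ))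
      (fun m : Fin (2 * N + 1) => qt ((((m : ℤ) - N : ℤ) : ℝ) * h)) hq' x hx
    convert this using 5
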